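/- If (1+t)^{d₁}...(1+t)^{d_k} is compared coefficientwise with (1+t+...+t^{d₁})···(1+t+...+t^{d_k}), then each coefficient of the latter is at most the corresponding coefficient of the former, with equality of the full polynomials if and only if all d_j = 1. -/

import Mathlib

open Polynomial Finset

/-- Coefficientwise nonnegativity and domination is multiplicative over finite products. -/
lemma coeffwise_prod_le {ι : Type*} (s : Finset ι) (p q : ι → Polynomial ℤ)
    (h0 : ∀ j ∈ s, ∀ n, 0 ≤ (p j).coeff n)
    (hle : ∀ j ∈ s, ∀ n, (p j).coeff n ≤ (q j).coeff n) :
    (∀ n, 0 ≤ (∏ j ∈ s, p j).coeff n) ∧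
      (∀ n, (∏ j ∈ s, p j).coeff n ≤ (∏ j ∈ s, q j).coeff n) := by
  induction s using Finset.cons_induction with
  | empty => simp [Polynomial.coeff_one]; intro n; split <;> simp
  | cons a s ha ih =>
    obtain ⟨ih0, ihle⟩ := ih (fun j hj => h0 j (Finset.mem_cons_of_mem hj))
      (fun j hj => hle j (Finset.mem_cons_of_mem hj))
    have ha0 := h0 a (Finset.mem_cons_self a s)
    have hale := hle a (Finset.mem_cons_self a s)
    rw [Finset.prod_cons, Finset.prod_cons]
    constructor
    · intro n
      rw [Polynomial.coeff_mul]
      exact Finset.sum_nonneg fun x _ => mul_nonneg (ha0 x.1) (ih0 x.2)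
    · intro n
      rw [Polynomial.coeff_mul, Polynomial.coeff_mul]
      refine Finset.sum_le_sum fun x _ => ?_
      exact mul_le_mul (hale x.1) (ihle x.2) (ih0 x.2) (le_trans (ha0 x.1) (hale x.1))

lemma coeff_one_prod' {ι : Type*} (s : Finset ι) (p : ι → Polynomial ℤ)
    (h0 : ∀ j ∈ s, (p j).coeff 0 = 1) :
    (∏ j ∈ s, p j).coeff 0 = 1 ∧
      (∏ j ∈ s, p j).coeff 1 = ∑ j ∈ s, (p j).coeff 1 := by
  induction s using Finset.cons_induction with
  | empty => simp [Polynomial.coeff_one]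
  | cons a s ha ih =>
    obtain ⟨ih0, ih1⟩ := ih (fun j hj => h0 j (Finset.mem_cons_of_mem hj))
    have ha0 := h0 a (Finset.mem_cons_self a s)
    rw [Finset.prod_cons, Finset.sum_cons]
    constructor
    · rw [Polynomial.mul_coeff_zero, ha0, ih0, mul_one]
    · rw [Polynomial.coeff_mul]
      rw [show (Finset.HasAntidiagonal.antidiagonal 1 : Finset (ℕ × ℕ)) = {(0,1),(1,0)} from rfl]
      simp [ha0, ih0, ih1, add_comm]

lemma geom_coeff (d n : ℕ) :
    (∑ i ∈ Finset.range (d + 1), (X : Polynomial ℤ) ^ i).coeff n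
      = if n ≤ d then 1 else 0 := by
  rw [Polynomial.finset_sum_coeff]
  simp only [Polynomial.coeff_X_pow]
  rw [Finset.sum_ite_eq (Finset.range (d+1)) n (fun _ => (1 : ℤ))]
  simp [Nat.lt_succ_iff]

theorem prod_geom_le_prod_one_add_pow (k : ℕ) (dv : Fin k → ℕ) (hpos : ∀ j, 1 ≤ dv j) :
    (∀ n : ℕ,
        (∏ j, ∑ i ∈ Finset.range (dv j + 1), (X : Polynomial ℤ) ^ i).coeff n ≤
          (∏ j, ((1 : Polynomial ℤ) + X) ^ dv j).coeff n) ∧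
      ((∏ j, ∑ i ∈ Finset.range (dv j + 1), (X : Polynomial ℤ) ^ i) =
          ∏ j, ((1 : Polynomial ℤ) + X) ^ dv j ↔ ∀ j, dv j = 1) := by
  have hbin : ∀ (d n : ℕ), ((1 + X : Polynomial ℤ) ^ d).coeff n = (d.choose n : ℤ) := by
    intro d n
    rw [add_comm]
    exact_mod_cast Polynomial.coeff_X_add_one_pow ℤ d n
  have key := coeffwise_prod_le (Finset.univ : Finset (Fin k))
    (fun j => ∑ i ∈ Finset.range (dv j + 1), (X : Polynomial ℤ) ^ i)
    (fun j => ((1 : Polynomial ℤ) + X) ^ dv j)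
    (fun j _ n => by rw [geom_coeff]; split <;> norm_num)
    (fun j _ n => by
      rw [geom_coeff, hbin]
      split
      · exact_mod_cast Nat.one_le_iff_ne_zero.mpr (Nat.choose_pos (by omega)).ne'
      · positivity)
  refine ⟨key.2, ?_, ?_⟩
  · intro heq
    have hL := coeff_one_prod' Finset.univ
      (fun j => ∑ i ∈ Finset.range (dv j + 1), (X : Polynomial ℤ) ^ i)
      (fun j _ => by rw [geom_coeff]; simp)
    have hR := coeff_one_prod' Finset.univ
      (fun j => ((1 : Polynomial ℤ) + X) ^ dv j)
      (fun j _ => by rw [hbin]; simp)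
    have h1 := hL.2
    rw [heq, hR.2] at h1
    simp only [geom_coeff, hbin, Nat.choose_one_right] at h1
    have h1' : ∑ j : Fin k, (1 : ℤ) = ∑ j : Fin k, (dv j : ℤ) := by
      rw [h1]; exact Finset.sum_congr rfl fun j _ => by simp [hpos j]
    have := (Finset.sum_eq_sum_iff_of_le (s := (Finset.univ : Finset (Fin k)))
      (f := fun _ => (1 : ℤ)) (g := fun j => (dv j : ℤ))
      (fun j _ => by show (1:ℤ) ≤ (dv j : ℤ); exact_mod_cast hpos j)).mp h1'
    intro j
    have := this j (Finset.mem_univ j)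
    exact_mod_cast this.symm
  · intro h
    apply Finset.prod_congr rfl
    intro j _
    rw [h j]
    simp [Finset.sum_range_succ]
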